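/- Let θ ∈ [0,1], let x ∈ R^n with residual r = b − Ax satisfying Aᵀr ≠ 0, and let ε = (θ/‖Aᵀr‖₂²)·max_{1≤j≤n} |A_(j)ᵀ r|²/‖A_(j)‖₂² + (1−θ)/‖A‖_F². Suppose J' is a proper subset of {1,…,n} with A_{J'}ᵀ r = 0 and ‖A‖_F² − ‖A_{J'}‖_F² > 0. Then ‖Aᵀr‖₂² · ε ≥ (θ·‖A‖_F²/(‖A‖_F² − ‖A_{J'}‖_F²) + (1−θ)) · (σ_min(A)²/‖A‖_F²) · ‖x − x⋆‖²_{AᵀA}. -/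

import Mathlib

noncomputable section
open Matrix

/-- Squared Euclidean norm `‖v‖₂²` of a vector. -/
def norm2 {ι : Type*} [Fintype ι] (v : ι → ℝ) : ℝ := ∑ i, (v i) ^ 2

/-- Squared Frobenius norm `‖A‖_F²` of a matrix. -/
def frob2 {ι κ : Type*} [Fintype ι] [Fintype κ] (A : Matrix ι κ ℝ) : ℝ :=
  ∑ i, ∑ j, (A i j) ^ 2

/-- Squared largest singular value `σ_max(B)²`, i.e. the largest eigenvalue of `Bᵀ * B`. -/
def sigmaMaxSq {ι κ : Type*} [Fintype ι] [Fintype κ] [DecidableEq κ]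
    (B : Matrix ι κ ℝ) : ℝ :=
  sSup (Set.range (by simpa using Matrix.isHermitian_conjTranspose_mul_self B : (Bᵀ * B).IsHermitian).eigenvalues)

/-- Squared smallest singular value `σ_min(B)²`, i.e. the smallest eigenvalue of `Bᵀ * B`. -/
def sigmaMinSq {ι κ : Type*} [Fintype ι] [Fintype κ] [DecidableEq κ]
    (B : Matrix ι κ ℝ) : ℝ :=
  sInf (Set.range (by simpa using Matrix.isHermitian_conjTranspose_mul_self B : (Bᵀ * B).IsHermitian).eigenvalues)

/-- Squared Euclidean norm `‖A_(j)‖₂²` of the `j`-th column of `A`. -/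
def col2 {m n : ℕ} (A : Matrix (Fin m) (Fin n) ℝ) (j : Fin n) : ℝ := ∑ i, (A i j) ^ 2

/-- `A` has full column rank: its columns are linearly independent. -/
def FullColRank {m n : ℕ} (A : Matrix (Fin m) (Fin n) ℝ) : Prop :=
  LinearIndependent ℝ fun j : Fin n => (fun i => A i j : Fin m → ℝ)

/-- `max_{1 ≤ j ≤ n} |A_(j)ᵀ r|² / ‖A_(j)‖₂²`. -/
def maxRatio {m n : ℕ} (A : Matrix (Fin m) (Fin n) ℝ) (r : Fin m → ℝ) : ℝ :=
  ⨆ j : Fin n, ((Aᵀ *ᵥ r) j) ^ 2 / col2 A j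

/-- The greedy parameter
`ε = (θ/‖Aᵀr‖₂²)·max_j |A_(j)ᵀ r|²/‖A_(j)‖₂² + (1−θ)/‖A‖_F²`. -/
def eps {m n : ℕ} (A : Matrix (Fin m) (Fin n) ℝ) (r : Fin m → ℝ) (θ : ℝ) : ℝ :=
  θ / norm2 (Aᵀ *ᵥ r) * maxRatio A r + (1 - θ) / frob2 A

open Classical in
/-- The greedy index set `J = { j : |A_(j)ᵀ r|² ≥ ε ‖Aᵀr‖₂² ‖A_(j)‖₂² }`. -/
def greedySet {m n : ℕ} (A : Matrix (Fin m) (Fin n) ℝ) (r : Fin m → ℝ) (θ : ℝ) :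
    Finset (Fin n) :=
  Finset.univ.filter fun j =>
    eps A r θ * norm2 (Aᵀ *ᵥ r) * col2 A j ≤ ((Aᵀ *ᵥ r) j) ^ 2

/-- The column submatrix `A_J` of `A`, with columns indexed by `J`. -/
def subCols {m n : ℕ} (A : Matrix (Fin m) (Fin n) ℝ) (J : Finset (Fin n)) :
    Matrix (Fin m) {j // j ∈ J} ℝ :=
  A.submatrix id fun j => (j : Fin n)

/-- The submatrix `I_J` of the `n × n` identity with columns indexed by `J`. -/
def subId {n : ℕ} (J : Finset (Fin n)) : Matrix (Fin n) {j // j ∈ J} ℝ :=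
  (1 : Matrix (Fin n) (Fin n) ℝ).submatrix id fun j => (j : Fin n)

/-- Moore–Penrose pseudoinverse of a full-column-rank matrix: `B† = (BᵀB)⁻¹Bᵀ`. -/
def pinv {ι κ : Type*} [Fintype ι] [Fintype κ] [DecidableEq κ] (B : Matrix ι κ ℝ) :
    Matrix κ ι ℝ :=
  (Bᵀ * B)⁻¹ * Bᵀ

/-- The matrix `Ã_J` whose columns are the normalized columns `A_(j)/‖A_(j)‖₂`, `j ∈ J`. -/
def tildeA {m n : ℕ} (A : Matrix (Fin m) (Fin n) ℝ) (J : Finset (Fin n)) :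
    Matrix (Fin m) {j // j ∈ J} ℝ :=
  Matrix.of fun i j => A i (j : Fin n) / Real.sqrt (col2 A (j : Fin n))

/-- The matrix `Ĩ_J` whose columns are `e_j/‖A_(j)‖₂`, `j ∈ J`. -/
def tildeI {m n : ℕ} (A : Matrix (Fin m) (Fin n) ℝ) (J : Finset (Fin n)) :
    Matrix (Fin n) {j // j ∈ J} ℝ :=
  Matrix.of fun i j => (if i = (j : Fin n) then 1 else 0) / Real.sqrt (col2 A (j : Fin n))

/-! ### Auxiliary lemmas -/

lemma norm2_eq_dot {ι : Type*} [Fintype ι] (v : ι → ℝ) : norm2 v = v ⬝ᵥ v := by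
  simp [norm2, dotProduct, sq]

lemma norm2_nonneg' {ι : Type*} [Fintype ι] (v : ι → ℝ) : 0 ≤ norm2 v :=
  Finset.sum_nonneg fun i _ => sq_nonneg _

lemma norm2_pos' {ι : Type*} [Fintype ι] {v : ι → ℝ} (hv : v ≠ 0) : 0 < norm2 v := by
  rcases (norm2_nonneg' v).lt_or_eq with h | h
  · exact h
  · exfalso; apply hv; funext i
    have := (Finset.sum_eq_zero_iff_of_nonneg (fun i _ => sq_nonneg (v i))).1 h.symm i
      (Finset.mem_univ i)
    exact pow_eq_zero_iff (n := 2) (by norm_num) |>.1 this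

lemma star_dot' {n : ℕ} (U : Matrix (Fin n) (Fin n) ℝ) (v w : Fin n → ℝ) :
    v ⬝ᵥ (U *ᵥ w) = ((star U) *ᵥ v) ⬝ᵥ w := by
  rw [dotProduct_mulVec, ← mulVec_transpose, ← conjTranspose_eq_transpose_of_trivial,
    ← star_eq_conjTranspose]

lemma unit_dot' {n : ℕ} (U : Matrix (Fin n) (Fin n) ℝ) (hU : star U * U = 1)
    (v w : Fin n → ℝ) : (U *ᵥ v) ⬝ᵥ (U *ᵥ w) = v ⬝ᵥ w := by
  rw [star_dot', mulVec_mulVec, hU, one_mulVec]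

lemma sigmaMinSq_nonneg' {m n : ℕ} (hn : 0 < n) (A : Matrix (Fin m) (Fin n) ℝ) :
    0 ≤ sigmaMinSq A := by
  haveI : Nonempty (Fin n) := Fin.pos_iff_nonempty.mp hn
  have hfin : (Set.range (by simpa using Matrix.isHermitian_conjTranspose_mul_self A : (Aᵀ * A).IsHermitian).eigenvalues).Finite :=
    Set.finite_range _
  obtain ⟨i, hi⟩ := (Set.range_nonempty _).csInf_mem hfin
  rw [sigmaMinSq, ← hi]
  exact Matrix.eigenvalues_conjTranspose_mul_self_nonneg A i

lemma spec_bound' {m n : ℕ} (hn : 0 < n) (A : Matrix (Fin m) (Fin n) ℝ) (d : Fin n → ℝ) :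
    sigmaMinSq A * norm2 (A *ᵥ d) ≤ norm2 ((Aᵀ * A) *ᵥ d) := by
  haveI : Nonempty (Fin n) := Fin.pos_iff_nonempty.mp hn
  have hM : (Aᵀ * A).IsHermitian := by simpa using Matrix.isHermitian_conjTranspose_mul_self A
  set lam := hM.eigenvalues with hlam
  have hfin : (Set.range lam).Finite := Set.finite_range _
  have hs_le : ∀ i, sigmaMinSq A ≤ lam i := fun i =>
    csInf_le hfin.bddBelow ⟨i, rfl⟩
  have hs0 : 0 ≤ sigmaMinSq A := sigmaMinSq_nonneg' hn A
  set U : Matrix (Fin n) (Fin n) ℝ := (hM.eigenvectorUnitary : Matrix (Fin n) (Fin n) ℝ) with hUdef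
  have hU : star U * U = 1 := Unitary.coe_star_mul_self hM.eigenvectorUnitary
  have hspec : Aᴴ * A = U * Matrix.diagonal (RCLike.ofReal ∘ lam) * star U :=
    hM.spectral_theorem
  have hAT : Aᵀ * A = U * Matrix.diagonal lam * star U := by
    rw [← conjTranspose_eq_transpose_of_trivial, hspec]
    congr 1
  set c := (star U) *ᵥ d with hc
  have hMd : (Aᵀ * A) *ᵥ d = U *ᵥ (Matrix.diagonal lam *ᵥ c) := by
    rw [hAT, mulVec_mulVec, mulVec_mulVec]
  have h1 : norm2 ((Aᵀ * A) *ᵥ d) = ∑ i, (lam i * c i) ^ 2 := by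
    rw [norm2_eq_dot, hMd, unit_dot' U hU]
    simp [dotProduct, mulVec_diagonal, sq]
  have h2 : norm2 (A *ᵥ d) = ∑ i, lam i * (c i) ^ 2 := by
    rw [norm2_eq_dot, dotProduct_mulVec, ← mulVec_transpose, mulVec_mulVec, hMd,
      dotProduct_comm, star_dot', ← hc]
    simp only [dotProduct, mulVec_diagonal, sq]
    exact Finset.sum_congr rfl fun i _ => by ring
  rw [h1, h2, Finset.mul_sum]
  apply Finset.sum_le_sum
  intro i _
  have hli : 0 ≤ lam i := Matrix.eigenvalues_conjTranspose_mul_self_nonneg A i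
  have := hs_le i
  nlinarith [mul_nonneg (mul_nonneg (sub_nonneg.2 this) hli) (sq_nonneg (c i))]


/-- lower bound on `‖Aᵀr‖₂² ε` when the residual is orthogonal to the
columns in a proper subset `J'`:

`‖Aᵀr‖₂² ε ≥ (θ‖A‖_F²/(‖A‖_F² − ‖A_{J'}‖_F²) + (1−θ)) (σ_min(A)²/‖A‖_F²) ‖x − x⋆‖²_{AᵀA}`. -/
theorem stmt12 {m n : ℕ} (A : Matrix (Fin m) (Fin n) ℝ) (hA : FullColRank A)
    (b : Fin m → ℝ) (xstar : Fin n → ℝ) (hstar : (Aᵀ * A) *ᵥ xstar = Aᵀ *ᵥ b)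
    (θ : ℝ) (hθ : θ ∈ Set.Icc (0 : ℝ) 1) (x : Fin n → ℝ)
    (r : Fin m → ℝ) (hr : r = b - A *ᵥ x) (hr0 : Aᵀ *ᵥ r ≠ 0)
    (J' : Finset (Fin n)) (hJ' : J' ≠ Finset.univ)
    (hrJ : (subCols A J')ᵀ *ᵥ r = 0)
    (hpos : 0 < frob2 A - frob2 (subCols A J')) :
    norm2 (Aᵀ *ᵥ r) * eps A r θ ≥
      (θ * frob2 A / (frob2 A - frob2 (subCols A J')) + (1 - θ)) *
        (sigmaMinSq A / frob2 A) * norm2 (A *ᵥ (x - xstar)) := by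
  obtain ⟨hθ0, hθ1⟩ := hθ
  set g : Fin n → ℝ := Aᵀ *ᵥ r with hg
  set G := norm2 g with hGdef
  set R := maxRatio A r with hRdef
  set F := frob2 A with hFdef
  set F' := frob2 (subCols A J') with hF'def
  set N := norm2 (A *ᵥ (x - xstar)) with hNdef
  set s := sigmaMinSq A with hsdef
  have hn : 0 < n := by
    obtain ⟨j, -⟩ : ∃ j, g j ≠ 0 := by
      by_contra h
      push_neg at h
      exact hr0 (funext h)
    exact j.pos
  have hG : 0 < G := norm2_pos' hr0
  have hgM : g = (Aᵀ * A) *ᵥ (xstar - x) := by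
    rw [hg, hr, mulVec_sub, ← hstar, mulVec_mulVec, ← mulVec_sub]
  have hNeq : N = norm2 (A *ᵥ (xstar - x)) := by
    rw [hNdef]
    have h : A *ᵥ (x - xstar) = -(A *ᵥ (xstar - x)) := by
      rw [← mulVec_neg, neg_sub]
    rw [h]
    simp [norm2]
  have hN0 : 0 ≤ N := norm2_nonneg' _
  have hSN : s * N ≤ G := by
    rw [hNeq, hGdef, hgM, hsdef]
    exact spec_bound' hn A (xstar - x)
  have hs0 : 0 ≤ s := sigmaMinSq_nonneg' hn A
  have hFcols : F = ∑ j, col2 A j := by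
    rw [hFdef, frob2]; exact Finset.sum_comm
  have hF'cols : F' = ∑ j ∈ J', col2 A j := by
    rw [hF'def, frob2, Finset.sum_comm, ← Finset.sum_coe_sort J' (fun j => col2 A j)]
    exact Finset.sum_congr rfl fun j _ => rfl
  have hcol0 : ∀ j, 0 ≤ col2 A j := fun j => Finset.sum_nonneg fun i _ => sq_nonneg _
  have hcompl : ∑ j ∈ J'ᶜ, col2 A j = F - F' := by
    have h := Finset.sum_add_sum_compl J' (fun j => col2 A j)
    rw [hFcols, hF'cols]; linarith
  have hF'0 : 0 ≤ F' := by
    rw [hF'cols]; exact Finset.sum_nonneg fun j _ => hcol0 j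
  have hF : 0 < F := by linarith
  have hgJ : ∀ j ∈ J', g j = 0 := by
    intro j hj
    have h := congrFun hrJ ⟨j, hj⟩
    simpa [subCols, mulVec, dotProduct, transpose_apply, hg] using h
  have hRj : ∀ j, (g j) ^ 2 ≤ R * col2 A j := by
    intro j
    rcases (hcol0 j).lt_or_eq with hc | hc
    · have hb : BddAbove (Set.range fun j => ((Aᵀ *ᵥ r) j) ^ 2 / col2 A j) :=
        (Set.finite_range _).bddAbove
      have hle : (g j) ^ 2 / col2 A j ≤ R := le_ciSup hb j
      calc (g j) ^ 2 = (g j) ^ 2 / col2 A j * col2 A j := by field_simp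
        _ ≤ R * col2 A j := mul_le_mul_of_nonneg_right hle (hcol0 j)
    · have hAij : ∀ i, A i j = 0 := by
        intro i
        have h := (Finset.sum_eq_zero_iff_of_nonneg (fun i _ => sq_nonneg (A i j))).1 hc.symm i
          (Finset.mem_univ i)
        exact pow_eq_zero_iff (n := 2) (by norm_num) |>.1 h
      have hgj : g j = 0 := by
        simp [hg, mulVec, dotProduct, transpose_apply, hAij]
      rw [hgj, ← hc]
      simp
  have hGR : G ≤ R * (F - F') := by
    have h1 : G = ∑ j ∈ J'ᶜ, (g j) ^ 2 := by
      rw [hGdef, norm2, ← Finset.sum_add_sum_compl J' (fun j => (g j) ^ 2)]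
      have h : ∑ j ∈ J', (g j) ^ 2 = 0 :=
        Finset.sum_eq_zero fun j hj => by rw [hgJ j hj]; ring
      rw [h, zero_add]
    rw [h1, ← hcompl, Finset.mul_sum]
    exact Finset.sum_le_sum fun j _ => hRj j
  have hRge : G / (F - F') ≤ R := (div_le_iff₀ hpos).2 hGR
  have hLHS : G * eps A r θ = θ * R + (1 - θ) * (G / F) := by
    rw [eps, ← hg, ← hGdef, ← hRdef, ← hFdef]
    field_simp
  rw [ge_iff_le, hLHS]
  have hcoef : 0 ≤ θ * F / (F - F') + (1 - θ) := by
    have h := div_nonneg (mul_nonneg hθ0 hF.le) hpos.le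
    linarith
  calc (θ * F / (F - F') + (1 - θ)) * (s / F) * N
      = (θ * F / (F - F') + (1 - θ)) * ((s * N) / F) := by ring
    _ ≤ (θ * F / (F - F') + (1 - θ)) * (G / F) := by
        apply mul_le_mul_of_nonneg_left _ hcoef
        gcongr
    _ = θ * (G / (F - F')) + (1 - θ) * (G / F) := by
        field_simp
    _ ≤ θ * R + (1 - θ) * (G / F) := by
        have h := mul_le_mul_of_nonneg_left hRge hθ0
        linarith
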